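/- Let α be a nonnegative integer, β > −1 a real number, and i an integer with i > 2α+4. Then b_i(α,β,x) = 0 for all real x. -/
import Mathlib


/-- The Pochhammer symbol (rising factorial) `(a)_k = a (a+1) ⋯ (a+k-1)`. -/
noncomputable def poch (a : ℝ) (k : ℕ) : ℝ := (ascPochhammer ℝ k).eval a

/-- The coefficient `b_i(α,β,x)` of the differential equation:
`b_i(α,β,x) = (α+β+2) (−2)^i Σ_{ℓ=0}^{i−1} [(α+3)_{i−ℓ−1} (−α−2)_{i−ℓ−1} /`
`((β+1)_{i−ℓ−1} (i−ℓ)! (i−ℓ−1)! ℓ!)] ₃F₂(−ℓ,α+β+3,α+i−ℓ+2;β+i−ℓ,i−ℓ+1;1) ((x−1)/2)^{ℓ+1}`. -/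
noncomputable def bCoef (α β : ℝ) (i : ℕ) (x : ℝ) : ℝ :=
  (α + β + 2) * (-2 : ℝ) ^ i *
    ∑ ℓ ∈ Finset.range i,
      poch (α + 3) (i - ℓ - 1) * poch (-α - 2) (i - ℓ - 1) /
        (poch (β + 1) (i - ℓ - 1) * Nat.factorial (i - ℓ) * Nat.factorial (i - ℓ - 1) *
          Nat.factorial ℓ) *
      (∑ m ∈ Finset.range (ℓ + 1),
        poch (-(ℓ : ℝ)) m * poch (α + β + 3) m * poch (α + (i : ℝ) - (ℓ : ℝ) + 2) m /
          (poch (β + (i : ℝ) - (ℓ : ℝ)) m * poch ((i : ℝ) - (ℓ : ℝ) + 1) m *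
            Nat.factorial m)) *
      ((x - 1) / 2) ^ (ℓ + 1)

open Finset Polynomial fwdDiff

lemma poch_eq_prod (a : ℝ) (k : ℕ) : poch a k = ∏ j ∈ Finset.range k, (a + j) := by
  induction k with
  | zero => simp [poch]
  | succ n ih =>
    rw [Finset.prod_range_succ, ← ih]
    simp only [poch, ascPochhammer_succ_eval]

lemma poch_pos {a : ℝ} (ha : 0 < a) (k : ℕ) : 0 < poch a k :=
  ascPochhammer_pos k a ha

lemma poch_add (a : ℝ) (s t : ℕ) : poch a (s + t) = poch a s * poch (a + s) t := by
  rw [poch_eq_prod, poch_eq_prod, poch_eq_prod, Finset.prod_range_add]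
  congr 1
  refine Finset.prod_congr rfl fun j _ => ?_
  push_cast
  ring

/-- Key product-shift identity:
`(a)_m (a-q+m)_{ℓ-m} = (a)_{ℓ-q} (a-q+m)_q` for `m ≤ ℓ`, `q ≤ ℓ`. -/
lemma poch_swap (a : ℝ) (q ℓ m : ℕ) (hm : m ≤ ℓ) (hq : q ≤ ℓ) :
    poch a m * poch (a - q + m) (ℓ - m) = poch a (ℓ - q) * poch (a - q + m) q := by
  rcases le_total (m + q) ℓ with h | h
  · have e1 : poch a (ℓ - q) = poch a m * poch (a + m) (ℓ - q - m) := by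
      rw [← poch_add]
      congr 1
      omega
    have e2 : poch (a - q + m) (ℓ - m) = poch (a - q + m) q * poch (a + m) (ℓ - q - m) := by
      have h2 := poch_add (a - q + m) q (ℓ - q - m)
      have harg : a - q + m + q = a + m := by ring
      rw [harg] at h2
      rw [← h2]
      congr 1
      omega
    rw [e1, e2]; ring
  · have e1 : poch a m = poch a (ℓ - q) * poch (a + (ℓ - q : ℕ)) (m - (ℓ - q)) := by
      rw [← poch_add]
      congr 1
      omega
    have e2 : poch (a - q + m) q
        = poch (a - q + m) (ℓ - m) * poch (a + (ℓ - q : ℕ)) (m - (ℓ - q)) := by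
      have h2 := poch_add (a - q + m) (ℓ - m) (q - (ℓ - m))
      have harg : a - q + m + (ℓ - m : ℕ) = a + (ℓ - q : ℕ) := by
        have c1 : ((ℓ - m : ℕ) : ℝ) = (ℓ : ℝ) - m := by
          push_cast [Nat.cast_sub hm]; ring
        have c2 : ((ℓ - q : ℕ) : ℝ) = (ℓ : ℝ) - q := by
          push_cast [Nat.cast_sub hq]; ring
        rw [c1, c2]; ring
      rw [harg] at h2
      have hnum : (ℓ - m) + (q - (ℓ - m)) = q := by omega
      rw [hnum] at h2
      rw [h2]
      congr 2
      omega
    rw [e1, e2]; ring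

lemma poch_neg_nat (ℓ m : ℕ) (h : m ≤ ℓ) :
    poch (-(ℓ : ℝ)) m = (-1) ^ m * (m.factorial : ℝ) * (ℓ.choose m : ℝ) := by
  rw [poch_eq_prod]
  have step : ∀ j ∈ Finset.range m, (-(ℓ : ℝ) + j) = (-1) * ((ℓ - j : ℕ) : ℝ) := by
    intro j hj
    rw [Nat.cast_sub (by simp at hj; omega)]
    ring
  rw [Finset.prod_congr rfl step, Finset.prod_mul_distrib, Finset.prod_const, ← Nat.cast_prod,
    ← Nat.descFactorial_eq_prod_range, Nat.descFactorial_eq_factorial_mul_choose,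
    Finset.card_range]
  push_cast
  ring

lemma fwdDiff_poly (n : ℕ) : ∀ P : Polynomial ℝ, P.degree < (n : ℕ) →
    (Δ_[(1 : ℝ)])^[n] (fun y => P.eval y) = 0 := by
  induction n with
  | zero =>
    intro P hP
    have hP0 : P = 0 := by
      rw [← Polynomial.degree_eq_bot]
      exact Nat.WithBot.lt_zero_iff.mp (by exact_mod_cast hP)
    subst hP0
    funext y
    simp
  | succ n ih =>
    intro P hP
    rcases eq_or_ne P 0 with rfl | hP0
    · have h0 : (fun y : ℝ => (0 : Polynomial ℝ).eval y) = 0 := by funext y; simp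
      rw [h0]
      apply Function.iterate_fixed
      funext y
      simp [fwdDiff]
    · rw [Function.iterate_succ_apply]
      have hQ : (Δ_[(1 : ℝ)] fun y => P.eval y)
          = fun y => (P.comp (X + C 1) - P).eval y := by
        funext y
        simp [fwdDiff, Polynomial.eval_comp]
      rw [hQ]
      apply ih
      have hXC : (X + C (1 : ℝ)).natDegree = 1 := Polynomial.natDegree_X_add_C 1
      have hlc : (P.comp (X + C 1)).leadingCoeff = P.leadingCoeff := by
        rw [Polynomial.leadingCoeff_comp (by rw [hXC]; exact one_ne_zero),
          (Polynomial.monic_X_add_C (1 : ℝ)).leadingCoeff, one_pow, mul_one]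
      have hc0 : P.comp (X + C 1) ≠ 0 := by
        intro hzero
        rw [hzero, Polynomial.leadingCoeff_zero] at hlc
        exact hP0 (Polynomial.leadingCoeff_eq_zero.mp hlc.symm)
      have hdeq : (P.comp (X + C 1)).degree = P.degree := by
        rw [Polynomial.degree_eq_natDegree hc0, Polynomial.degree_eq_natDegree hP0]
        rw [Polynomial.natDegree_comp, hXC, mul_one]
      have hsub := Polynomial.degree_sub_lt hdeq hc0 hlc
      rw [hdeq] at hsub
      have hle : P.degree ≤ (n : ℕ) := by
        rw [Polynomial.degree_eq_natDegree hP0] at hP ⊢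
        have : P.natDegree < n + 1 := by exact_mod_cast hP
        exact_mod_cast Nat.lt_succ_iff.mp this
      exact lt_of_lt_of_le hsub hle

lemma alt_sum_poly (ℓ : ℕ) (P : Polynomial ℝ) (hP : P.degree < (ℓ : ℕ)) :
    ∑ m ∈ Finset.range (ℓ + 1), (-1 : ℝ) ^ m * (ℓ.choose m : ℝ) * P.eval (m : ℝ) = 0 := by
  have key := fwdDiff_iter_eq_sum_shift (1 : ℝ) (fun y => P.eval y) ℓ 0
  rw [fwdDiff_poly ℓ P hP] at key
  have key2 : (0 : ℝ) = ∑ k ∈ Finset.range (ℓ + 1),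
      ((-1 : ℝ) ^ (ℓ - k) * (ℓ.choose k : ℝ)) * P.eval (k : ℝ) := by
    simpa [zsmul_eq_mul, nsmul_eq_mul, mul_assoc] using key
  have hsgn : ∀ k ∈ Finset.range (ℓ + 1),
      (-1 : ℝ) ^ k * (ℓ.choose k : ℝ) * P.eval (k : ℝ)
        = (-1 : ℝ) ^ ℓ * (((-1 : ℝ) ^ (ℓ - k) * (ℓ.choose k : ℝ)) * P.eval (k : ℝ)) := by
    intro k hk
    rw [Finset.mem_range] at hk
    have hkℓ : k ≤ ℓ := by omega
    have h1 : (-1 : ℝ) ^ ℓ = (-1 : ℝ) ^ (ℓ - k) * (-1 : ℝ) ^ k := by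
      rw [← pow_add]
      congr 1
      omega
    have h2 : (-1 : ℝ) ^ (ℓ - k) * (-1 : ℝ) ^ (ℓ - k) = 1 := by
      rw [← pow_add]
      exact Even.neg_one_pow ⟨ℓ - k, by ring⟩
    have h3 : (-1 : ℝ) ^ ℓ * (-1 : ℝ) ^ (ℓ - k) = (-1 : ℝ) ^ k := by
      rw [h1, mul_comm ((-1 : ℝ) ^ (ℓ - k)) ((-1 : ℝ) ^ k), mul_assoc, h2, mul_one]
    linear_combination (-((ℓ.choose k : ℝ) * P.eval (k : ℝ))) * h3
  rw [Finset.sum_congr rfl hsgn, ← Finset.mul_sum, ← key2, mul_zero]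

lemma inner_zero (α n ℓ : ℕ) (β : ℝ) (hβ : -1 < β) (h1 : 1 ≤ n) (h2 : n ≤ α + 3)
    (h3 : 2 * α + 4 - n < ℓ) :
    ∑ m ∈ Finset.range (ℓ + 1),
      poch (-(ℓ : ℝ)) m * poch (α + β + 3) m * poch ((α : ℝ) + n + 2) m /
        (poch (β + n) m * poch ((n : ℝ) + 1) m * Nat.factorial m) = 0 := by
  set q : ℕ := α + 3 - n with hqdef
  set N : ℕ := α + 1 with hNdef
  have hq : q ≤ ℓ := by omega
  have hN : N ≤ ℓ := by omega
  have hdeg : q + N < ℓ := by omega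
  set a : ℝ := (α : ℝ) + β + 3 with ha
  set b : ℝ := (α : ℝ) + n + 2 with hb
  set c : ℝ := β + n with hc
  set d : ℝ := (n : ℝ) + 1 with hd
  have hac : a - (q : ℝ) = c := by
    have : ((q : ℕ) : ℝ) = (α : ℝ) + 3 - n := by
      rw [hqdef]; push_cast [Nat.cast_sub h2]; ring
    rw [this, ha, hc]; ring
  have hbd : b - (N : ℝ) = d := by
    rw [hNdef, hb, hd]; push_cast; ring
  have hcpos : 0 < c := by
    have : (1 : ℝ) ≤ (n : ℝ) := by exact_mod_cast h1
    rw [hc]; linarith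
  have hdpos : 0 < d := by
    have : (0 : ℝ) ≤ (n : ℝ) := Nat.cast_nonneg n
    rw [hd]; linarith
  set P : Polynomial ℝ :=
    (∏ j ∈ Finset.range q, (X + C (c + (j : ℝ)))) * (∏ j ∈ Finset.range N, (X + C (d + (j : ℝ)))) with hP
  have hPeval : ∀ m : ℕ, P.eval (m : ℝ) = poch (c + m) q * poch (d + m) N := by
    intro m
    rw [hP]
    simp only [Polynomial.eval_mul, Polynomial.eval_prod, Polynomial.eval_add, Polynomial.eval_X,
      Polynomial.eval_C]
    rw [poch_eq_prod, poch_eq_prod]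
    congr 1 <;> exact Finset.prod_congr rfl fun j _ => by ring
  have hPmonic : P.Monic := by
    apply Polynomial.Monic.mul <;>
      exact Polynomial.monic_prod_of_monic _ _ fun j _ => Polynomial.monic_X_add_C _
  have hPdeg : P.degree < (ℓ : ℕ) := by
    have hnd : P.natDegree = q + N := by
      rw [hP, Polynomial.natDegree_mul]
      · rw [Polynomial.natDegree_prod _ _ fun j _ => (Polynomial.monic_X_add_C _).ne_zero,
          Polynomial.natDegree_prod _ _ fun j _ => (Polynomial.monic_X_add_C _).ne_zero]
        simp only [Polynomial.natDegree_X_add_C, Finset.sum_const, Finset.card_range,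
          smul_eq_mul, mul_one]
      · exact (Polynomial.monic_prod_of_monic _ _ fun j _ =>
          Polynomial.monic_X_add_C _).ne_zero
      · exact (Polynomial.monic_prod_of_monic _ _ fun j _ =>
          Polynomial.monic_X_add_C _).ne_zero
    rw [Polynomial.degree_eq_natDegree hPmonic.ne_zero, hnd]
    exact_mod_cast hdeg
  set K : ℝ := poch a (ℓ - q) * poch b (ℓ - N) / (poch c ℓ * poch d ℓ) with hK
  have key : ∀ m ∈ Finset.range (ℓ + 1),
      poch (-(ℓ : ℝ)) m * poch a m * poch b m / (poch c m * poch d m * Nat.factorial m)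
        = ((-1 : ℝ) ^ m * (ℓ.choose m : ℝ) * P.eval (m : ℝ)) * K := by
    intro m hm
    rw [Finset.mem_range] at hm
    have hmℓ : m ≤ ℓ := by omega
    have e1 : poch a m * poch (c + m) (ℓ - m) = poch a (ℓ - q) * poch (c + m) q := by
      have := poch_swap a q ℓ m hmℓ hq
      rwa [hac] at this
    have e2 : poch b m * poch (d + m) (ℓ - m) = poch b (ℓ - N) * poch (d + m) N := by
      have := poch_swap b N ℓ m hmℓ hN
      rwa [hbd] at this
    have e3 : poch c m * poch (c + m) (ℓ - m) = poch c ℓ := by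
      rw [← poch_add]
      congr 1
      omega
    have e4 : poch d m * poch (d + m) (ℓ - m) = poch d ℓ := by
      rw [← poch_add]
      congr 1
      omega
    have e5 := poch_neg_nat ℓ m hmℓ
    have hcm : poch c m ≠ 0 := ne_of_gt (poch_pos hcpos m)
    have hdm : poch d m ≠ 0 := ne_of_gt (poch_pos hdpos m)
    have hcl : poch c ℓ ≠ 0 := ne_of_gt (poch_pos hcpos ℓ)
    have hdl : poch d ℓ ≠ 0 := ne_of_gt (poch_pos hdpos ℓ)
    have hfac : (Nat.factorial m : ℝ) ≠ 0 := by positivity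
    rw [hK, ← mul_div_assoc,
      div_eq_div_iff (mul_ne_zero (mul_ne_zero hcm hdm) hfac) (mul_ne_zero hcl hdl)]
    rw [hPeval m, e5, ← e3, ← e4]
    linear_combination ((-1 : ℝ) ^ m * (Nat.factorial m : ℝ) * (ℓ.choose m : ℝ) *
        poch c m * poch d m) * (poch b m * poch (d + (m : ℝ)) (ℓ - m)) * e1 +
      ((-1 : ℝ) ^ m * (Nat.factorial m : ℝ) * (ℓ.choose m : ℝ) *
        poch c m * poch d m) * (poch a (ℓ - q) * poch (c + (m : ℝ)) q) * e2
  rw [Finset.sum_congr rfl key, ← Finset.sum_mul, alt_sum_poly ℓ P hPdeg, zero_mul]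

/-- for a nonnegative integer `α` the coefficients `b_i(α,β,x)`
vanish for `i > 2α+4`. -/
theorem bCoef_eq_zero_of_gt (α : ℕ) (β : ℝ) (hβ : -1 < β) (i : ℕ) (hi : 2 * α + 4 < i)
    (x : ℝ) : bCoef (α : ℝ) β i x = 0 := by
  unfold bCoef
  rw [Finset.sum_eq_zero, mul_zero]
  intro ℓ hℓ
  rw [Finset.mem_range] at hℓ
  set n : ℕ := i - ℓ with hn
  have hn1 : 1 ≤ n := by omega
  have hni : i = ℓ + n := by omega
  have hio : (i : ℝ) = (ℓ : ℝ) + n := by rw [hni]; push_cast; ring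
  by_cases hcase : α + 4 ≤ n
  · have hz : poch (-(α : ℝ) - 2) (i - ℓ - 1) = 0 := by
      rw [poch_eq_prod]
      apply Finset.prod_eq_zero (Finset.mem_range.mpr (show α + 2 < i - ℓ - 1 by omega))
      push_cast
      ring
    rw [hz]
    simp
  · have h2 : n ≤ α + 3 := by omega
    have h3 : 2 * α + 4 - n < ℓ := by omega
    have harg1 : poch ((α : ℝ) + (i : ℝ) - (ℓ : ℝ) + 2) = poch ((α : ℝ) + n + 2) := by
      congr 1
      rw [hio]; ring
    have harg2 : poch (β + (i : ℝ) - (ℓ : ℝ)) = poch (β + n) := by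
      congr 1
      rw [hio]; ring
    have harg3 : poch ((i : ℝ) - (ℓ : ℝ) + 1) = poch ((n : ℝ) + 1) := by
      congr 1
      rw [hio]; ring
    rw [harg1, harg2, harg3, inner_zero α n ℓ β hβ hn1 h2 h3]
    simp
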